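/- Let Y = ℂ, R a complex normed space, X = R × R*, W₁ ⊂ R, W₂ ⊂ R*, and let A be the duality pairing A(x,y) = ⟨y, x⟩ for x ∈ R, y ∈ R*. Suppose there exist x̃₁ ∈ W₁ and x̃₂ ∈ W₂ such that either (−x̃₁ ∈ W₁ and θ_Z ∈ I(x̃₁, x̃₂) ∩ I(−x̃₁, x̃₂)), or (−x̃₂ ∈ W₂ and θ_Z ∈ I(x̃₁, x̃₂) ∩ I(x̃₁, −x̃₂)). Then E(A, W₁ × W₂, I) ≥ |⟨x̃₂, x̃₁⟩|. -/

import Mathlib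

open scoped ENNReal NNReal

lemma norm_le_max_sub_add (a c : ℂ) : ‖a‖ ≤ ‖a - c‖ ∨ ‖a‖ ≤ ‖a + c‖ := by
  by_contra h
  push_neg at h
  have : ‖a + a‖ ≤ ‖a - c‖ + ‖a + c‖ := by
    calc ‖a + a‖ = ‖(a - c) + (a + c)‖ := by ring_nf
    _ ≤ ‖a - c‖ + ‖a + c‖ := norm_add_le _ _
  rw [show a + a = (2:ℂ) * a by ring, norm_mul] at this
  simp only [Complex.norm_ofNat] at this
  linarith [h.1, h.2]

/-- Lower estimate for optimal recovery of the duality pairing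
`A(x,y) = ⟨y,x⟩ = y x` on `W₁ × W₂ ⊆ R × R*`.  If `x̃₁ ∈ W₁`, `x̃₂ ∈ W₂` and either
(`-x̃₁ ∈ W₁` and `0 ∈ I(x̃₁,x̃₂) ∩ I(-x̃₁,x̃₂)`) or (`-x̃₂ ∈ W₂` and
`0 ∈ I(x̃₁,x̃₂) ∩ I(x̃₁,-x̃₂)`), then `E(A, W₁ × W₂, I) ≥ |⟨x̃₂, x̃₁⟩|`. -/
theorem optimal_recovery_lower_estimate_scalar_product
    {R Z : Type*} [NormedAddCommGroup R] [NormedSpace ℂ R]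
    [AddCommGroup Z] [Module ℂ Z]
    (W₁ : Set R) (W₂ : Set (StrongDual ℂ R))
    (I : R × StrongDual ℂ R → Set Z)
    (hI : ∀ x ∈ W₁, ∀ y ∈ W₂, (I (x, y)).Nonempty)
    (x₁ : R) (x₂ : StrongDual ℂ R) (hx₁ : x₁ ∈ W₁) (hx₂ : x₂ ∈ W₂)
    (hcase :
      (-x₁ ∈ W₁ ∧ (0 : Z) ∈ I (x₁, x₂) ∧ (0 : Z) ∈ I (-x₁, x₂)) ∨
      (-x₂ ∈ W₂ ∧ (0 : Z) ∈ I (x₁, x₂) ∧ (0 : Z) ∈ I (x₁, -x₂))) :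
    (⨅ Φ : Z → ℂ, ⨆ x ∈ W₁, ⨆ y ∈ W₂, ⨆ z ∈ I (x, y), (‖y x - Φ z‖₊ : ℝ≥0∞)) ≥
      (‖x₂ x₁‖₊ : ℝ≥0∞) := by
  rw [ge_iff_le, le_iInf_iff]
  intro Φ
  have hle : ∀ x, x ∈ W₁ → ∀ y, y ∈ W₂ → ∀ z, z ∈ I (x, y) →
      (‖y x - Φ z‖₊ : ℝ≥0∞) ≤
      ⨆ x ∈ W₁, ⨆ y ∈ W₂, ⨆ z ∈ I (x, y), (‖y x - Φ z‖₊ : ℝ≥0∞) := by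
    intro x hx y hy z hz
    exact le_iSup_of_le x (le_iSup_of_le hx (le_iSup_of_le y (le_iSup_of_le hy
      (le_iSup_of_le z (le_iSup_of_le hz le_rfl)))))
  have key : ‖x₂ x₁‖ ≤ ‖x₂ x₁ - Φ 0‖ ∨ ‖x₂ x₁‖ ≤ ‖x₂ x₁ + Φ 0‖ :=
    norm_le_max_sub_add _ _
  have coemono : ∀ a b : ℂ, ‖a‖ ≤ ‖b‖ → (‖a‖₊ : ℝ≥0∞) ≤ (‖b‖₊ : ℝ≥0∞) := by
    intro a b h
    exact_mod_cast h
  rcases hcase with ⟨hW, h0, h0'⟩ | ⟨hW, h0, h0'⟩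
  · rcases key with hk | hk
    · exact le_trans (coemono _ _ hk) (hle x₁ hx₁ x₂ hx₂ 0 h0)
    · have := hle (-x₁) hW x₂ hx₂ 0 h0'
      have heq : x₂ (-x₁) - Φ 0 = -(x₂ x₁ + Φ 0) := by
        rw [map_neg]; ring
      rw [heq, nnnorm_neg] at this
      exact le_trans (coemono _ _ hk) this
  · rcases key with hk | hk
    · exact le_trans (coemono _ _ hk) (hle x₁ hx₁ x₂ hx₂ 0 h0)
    · have := hle x₁ hx₁ (-x₂) hW 0 h0'
      have heq : (-x₂) x₁ - Φ 0 = -(x₂ x₁ + Φ 0) := by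
        simp; ring
      rw [heq, nnnorm_neg] at this
      exact le_trans (coemono _ _ hk) this
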